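/- Let D be a Young diagram, p, q coprime positive integers, K a positive integer, P = Kp, Q = Kq, with qx + py \leq Kpq - p - q for every (x,y) \in D. Then |{c \in D : q·a(c) \geq p·(l(c)+1)}| + |R^+_{P,Q} \ D| = |{c' \in R_{P,Q} \ D : q·a(c') \geq p·(l(c')+1)}|, where R^+_{P,Q} = {(x,y) \in (Z_{\geq 0})^2 : qx + py \leq Kpq - p - q}. -/

import Mathlib

/-- A Young diagram: a finite down-closed subset of ℕ². -/
def IsYoung (D : Finset (ℕ × ℕ)) : Prop :=
  ∀ x y x' y', (x, y) ∈ D → x' ≤ x → y' ≤ y → (x', y') ∈ D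

/-- Arm length of a box inside the diagram. -/
def arm (D : Finset (ℕ × ℕ)) (c : ℕ × ℕ) : ℕ :=
  (D.filter fun d => d.2 = c.2 ∧ c.1 < d.1).card

/-- Leg length of a box inside the diagram. -/
def leg (D : Finset (ℕ × ℕ)) (c : ℕ × ℕ) : ℕ :=
  (D.filter fun d => d.1 = c.1 ∧ c.2 < d.2).card

/-- Arm length of a box in the complement of the diagram. -/
def coArm (D : Finset (ℕ × ℕ)) (c : ℕ × ℕ) : ℕ :=
  ((Finset.range c.1).filter fun x' => (x', c.2) ∉ D).card

/-- Leg length of a box in the complement of the diagram. -/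
def coLeg (D : Finset (ℕ × ℕ)) (c : ℕ × ℕ) : ℕ :=
  ((Finset.range c.2).filter fun y' => (c.1, y') ∉ D).card

open Finset

lemma down_mem_iff (S : Finset ℕ) (h : ∀ a b : ℕ, a ≤ b → b ∈ S → a ∈ S) (x : ℕ) :
    x ∈ S ↔ x < S.card := by
  constructor
  · intro hx
    by_contra hlt
    push_neg at hlt
    have hsub : range (x + 1) ⊆ S := by
      intro a ha
      exact h a x (Nat.lt_succ_iff.mp (mem_range.mp ha)) hx
    have := card_le_card hsub
    simp only [card_range] at this
    omega
  · intro hx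
    by_contra hxS
    have hsub : S ⊆ range x := by
      intro b hb
      rw [mem_range]
      by_contra hbx
      exact hxS (h x b (by omega) hb)
    have := card_le_card hsub
    simp only [card_range] at this
    omega

/-- number of columns (among the first `P`) whose height exceeds `y` -/
def lA (P : ℕ) (f : ℕ → ℕ) (y : ℕ) : ℕ := ((range P).filter fun x => y < f x).card

lemma lA_lt_iff (P : ℕ) (f : ℕ → ℕ) (hf : ∀ x y : ℕ, x ≤ y → f y ≤ f x) (y x : ℕ) :
    x < lA P f y ↔ (x < P ∧ y < f x) := by
  have := down_mem_iff ((range P).filter fun x => y < f x) ?_ x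
  · rw [lA, ← this, mem_filter, mem_range]
  · intro a b hab hb
    simp only [mem_filter, mem_range] at hb ⊢
    exact ⟨lt_of_le_of_lt hab hb.1, lt_of_lt_of_le hb.2 (hf a b hab)⟩

lemma lA_le (P : ℕ) (f : ℕ → ℕ) (y : ℕ) : lA P f y ≤ P := by
  have := card_le_card (filter_subset (fun x => y < f x) (range P))
  simpa [lA, card_range] using this

lemma sum_Ico_telescope (g : ℕ → ℤ) {a b : ℕ} (h : a ≤ b) :
    ∑ y ∈ Ico a b, (g (y + 1) - g y) = g b - g a := by
  rw [Finset.sum_Ico_eq_sum_range]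
  have : ∀ i, g (a + i + 1) - g (a + i) = (fun j => g (a + j)) (i + 1) - (fun j => g (a + j)) i := by
    intro i; simp [Nat.add_assoc]
  calc ∑ i ∈ range (b - a), (g (a + i + 1) - g (a + i))
      = ∑ i ∈ range (b - a), ((fun j => g (a + j)) (i + 1) - (fun j => g (a + j)) i) := by
        exact Finset.sum_congr rfl fun i _ => this i
    _ = g (a + (b - a)) - g (a + 0) := Finset.sum_range_sub (fun j => g (a + j)) (b - a)
    _ = g b - g a := by rw [Nat.add_sub_cancel' h, Nat.add_zero]
lemma core (P Q : ℕ) (f : ℕ → ℕ) (hf : ∀ x y : ℕ, x ≤ y → f y ≤ f x) (hfQ : f 0 ≤ Q)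
    (g : ℕ → ℕ → ℤ) :
    (∑ x ∈ range P, (g (x + 1) (f x) - g x (f x)))
      - (∑ y ∈ range Q, (g (lA P f y) (y + 1) - g (lA P f y) y))
      = g P 0 - g 0 Q := by
  classical
  set upper : ℕ → ℕ := fun x => if x = 0 then Q else f (x - 1) with hupper
  set lower : ℕ → ℕ := fun x => if x = P then 0 else f x with hlower
  have hupperQ : ∀ x, upper x ≤ Q := by
    intro x; rw [hupper]; dsimp only; split
    · exact le_refl Q
    · exact le_trans (hf 0 (x - 1) (Nat.zero_le _)) hfQ
  have hle : ∀ x, lower x ≤ upper x := by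
    intro x; rw [hupper, hlower]; dsimp only
    by_cases h0 : x = 0
    · subst h0; simp only [if_pos rfl]; split
      · exact Nat.zero_le _
      · exact hfQ
    · rw [if_neg h0]; split
      · exact Nat.zero_le _
      · exact hf (x - 1) x (by omega)
  have hfiber : ∀ x ∈ range (P + 1),
      (range Q).filter (fun y => lA P f y = x) = Ico (lower x) (upper x) := by
    intro x hx
    have hxP : x ≤ P := by simpa [Nat.lt_succ_iff] using hx
    ext y
    simp only [mem_filter, mem_range, mem_Ico]
    constructor
    · rintro ⟨hyQ, rfl⟩
      constructor
      · rw [hlower]; dsimp only; split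
        · exact Nat.zero_le _
        · rename_i hne
          by_contra hcon
          push_neg at hcon
          have := (lA_lt_iff P f hf y (lA P f y)).mpr
            ⟨lt_of_le_of_ne (lA_le P f y) hne, hcon⟩
          omega
      · rw [hupper]; dsimp only; split
        · exact hyQ
        · rename_i h0
          have : lA P f y - 1 < lA P f y := by omega
          exact ((lA_lt_iff P f hf y _).mp this).2
    · rintro ⟨hlo, hhi⟩
      have hyQ : y < Q := lt_of_lt_of_le hhi (hupperQ x)
      refine ⟨hyQ, ?_⟩
      have h1 : lA P f y ≤ x := by
        by_contra h
        push_neg at h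
        have h2 := (lA_lt_iff P f hf y x).mp h
        rw [hlower] at hlo; revert hlo; dsimp only; split
        · omega
        · intro hlo; omega
      have h2 : x ≤ lA P f y := by
        rcases Nat.eq_zero_or_pos x with rfl | hx0
        · omega
        · have hy : y < f (x - 1) := by
            rw [hupper] at hhi; revert hhi; dsimp only
            rw [if_neg (by omega : ¬ x = 0)]; exact id
          have : x - 1 < lA P f y := (lA_lt_iff P f hf y (x - 1)).mpr ⟨by omega, hy⟩
          omega
      omega
  have hvert : (∑ y ∈ range Q, (g (lA P f y) (y + 1) - g (lA P f y) y))
      = ∑ x ∈ range (P + 1), (g x (upper x) - g x (lower x)) := by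
    rw [← Finset.sum_fiberwise_of_maps_to
      (fun y (_ : y ∈ range Q) => mem_range.mpr (Nat.lt_succ_of_le (lA_le P f y)))
      (fun y => g (lA P f y) (y + 1) - g (lA P f y) y)]
    refine Finset.sum_congr rfl fun x hx => ?_
    rw [Finset.sum_congr rfl (fun y hy => by rw [(mem_filter.mp hy).2] :
      ∀ y ∈ (range Q).filter (fun y => lA P f y = x),
        g (lA P f y) (y + 1) - g (lA P f y) y = g x (y + 1) - g x y)]
    rw [hfiber x hx, sum_Ico_telescope (fun y => g x y) (hle x)]
  have hhor : (∑ x ∈ range P, (g (x + 1) (f x) - g x (f x)))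
      = (g P (upper P) - g 0 Q) + ∑ x ∈ range P, (g x (upper x) - g x (f x)) := by
    have key : ∀ x ∈ range P, g (x + 1) (f x) - g x (f x)
        = ((fun x => g x (upper x)) (x + 1) - (fun x => g x (upper x)) x)
          + (g x (upper x) - g x (f x)) := by
      intro x _
      have h1 : upper (x + 1) = f x := by rw [hupper]; simp
      dsimp only
      rw [h1]; ring
    rw [Finset.sum_congr rfl key, Finset.sum_add_distrib,
      Finset.sum_range_sub (fun x => g x (upper x))]
    have h0 : upper 0 = Q := by rw [hupper]; simp
    rw [h0]
  rw [hvert, hhor, Finset.sum_range_succ]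
  have h1 : ∀ x ∈ range P, g x (upper x) - g x (lower x) = g x (upper x) - g x (f x) := by
    intro x hx
    have : lower x = f x := by rw [hlower]; dsimp only; rw [if_neg (Nat.ne_of_lt (mem_range.mp hx))]
    rw [this]
  rw [Finset.sum_congr rfl h1]
  have h2 : lower P = 0 := by rw [hlower]; dsimp only; rw [if_pos rfl]
  rw [h2]
  ring
lemma Wcount (p q y0 Q : ℕ) (hp : 0 < p) (hq : 0 < q) (hy0Q : y0 < Q) :
    (∑ y ∈ range Q, (if y < y0 ∧ q + p * y ≤ p * y0 ∧ p * y0 < q + p * y + p then (1 : ℤ) else 0))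
      = if q ≤ p * y0 then 1 else 0 := by
  by_cases hc : q ≤ p * y0
  · rw [if_pos hc]
    obtain ⟨m, hm⟩ : ∃ m, p * y0 = q + m := ⟨p * y0 - q, (Nat.add_sub_cancel' hc).symm⟩
    have hdm := Nat.div_add_mod m p
    have hmod : m % p < p := Nat.mod_lt _ hp
    have h1 : p * (m / p) ≤ m := by omega
    have h2 : m < p * (m / p) + p := by omega
    have ht_lt : (m / p) < y0 := by
      have hlt : p * (m / p) < p * y0 := by omega
      exact Nat.lt_of_mul_lt_mul_left hlt
    have key : ∀ y ∈ range Q,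
        (if y < y0 ∧ q + p * y ≤ p * y0 ∧ p * y0 < q + p * y + p then (1 : ℤ) else 0)
          = if y = (m / p) then 1 else 0 := by
      intro y _
      congr 1
      simp only [eq_iff_iff]
      constructor
      · rintro ⟨-, hA, hB⟩
        have e1 : p * ((m / p) + 1) = p * (m / p) + p := by ring
        have e2 : p * (y + 1) = p * y + p := by ring
        have hy1 : p * y < p * ((m / p) + 1) := by omega
        have hy2 : p * (m / p) < p * (y + 1) := by omega
        have := Nat.lt_of_mul_lt_mul_left hy1
        have := Nat.lt_of_mul_lt_mul_left hy2
        omega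
      · rintro rfl
        exact ⟨ht_lt, by omega, by omega⟩
    rw [Finset.sum_congr rfl key, Finset.sum_ite_eq' (range Q) (m / p) (fun _ => (1 : ℤ)),
      if_pos (mem_range.mpr (by omega))]
  · rw [if_neg hc]
    apply Finset.sum_eq_zero
    intro y _
    rw [if_neg]
    rintro ⟨-, hA, -⟩
    omega
lemma RRcount (q D x0 P : ℕ) (hq : 0 < q) (hx0 : q * x0 < D) (hD : D + q ≤ q * P) :
    ∑ x ∈ range P, (if x0 < x ∧ D ≤ q * x ∧ q * x < D + q then (1 : ℤ) else 0) = 1 := by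
  obtain ⟨m, hm⟩ : ∃ m, D + q = m + 1 := ⟨D + q - 1, by omega⟩
  have hdm := Nat.div_add_mod m q
  have hmod : m % q < q := Nat.mod_lt _ hq
  have h1 : q * (m / q) ≤ m := by omega
  have h2 : m < q * (m / q) + q := by omega
  have hstar1 : D ≤ q * (m / q) := by omega
  have hstar2 : q * (m / q) < D + q := by omega
  have hgt : x0 < m / q := by
    have : q * x0 < q * (m / q) := by omega
    exact Nat.lt_of_mul_lt_mul_left this
  have hlt : m / q < P := by
    have : q * (m / q) < q * P := by omega
    exact Nat.lt_of_mul_lt_mul_left this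
  have key : ∀ x ∈ range P,
      (if x0 < x ∧ D ≤ q * x ∧ q * x < D + q then (1 : ℤ) else 0)
        = if x = m / q then 1 else 0 := by
    intro x _
    congr 1
    simp only [eq_iff_iff]
    constructor
    · rintro ⟨-, hA, hB⟩
      have e1 : q * ((m / q) + 1) = q * (m / q) + q := by ring
      have e2 : q * (x + 1) = q * x + q := by ring
      have hy1 : q * x < q * ((m / q) + 1) := by omega
      have hy2 : q * (m / q) < q * (x + 1) := by omega
      have := Nat.lt_of_mul_lt_mul_left hy1
      have := Nat.lt_of_mul_lt_mul_left hy2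
      omega
    · rintro rfl
      exact ⟨hgt, hstar1, hstar2⟩
  rw [Finset.sum_congr rfl key, Finset.sum_ite_eq' (range P) (m / q) (fun _ => (1 : ℤ)),
    if_pos (mem_range.mpr hlt)]
def chiA (p q P : ℕ) (f : ℕ → ℕ) (x y : ℕ) : ℤ :=
  if y < f x ∧ p * f x + q * x + q ≤ q * lA P f y + p * y then 1 else 0

def chiB (p q T : ℕ) (f : ℕ → ℕ) (x y : ℕ) : ℤ :=
  if f x ≤ y ∧ q * x + p * y + p + q ≤ T then 1 else 0

def chiC (p q P : ℕ) (f : ℕ → ℕ) (x y : ℕ) : ℤ :=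
  if f x ≤ y ∧ p * y + p + q * lA P f y ≤ q * x + p * f x then 1 else 0
lemma abstract (p q K : ℕ) (hp : 0 < p) (hq : 0 < q) (hK : 0 < K) (n : ℕ) :
    ∀ f : ℕ → ℕ, (∀ x y : ℕ, x ≤ y → f y ≤ f x) →
    (∀ x y : ℕ, y < f x → q * x + p * y + p + q ≤ K * p * q) →
    (∑ x ∈ range (K * p), f x = n) →
    (∑ x ∈ range (K * p), ∑ y ∈ range (K * q), chiA p q (K * p) f x y)
      + (∑ x ∈ range (K * p), ∑ y ∈ range (K * q), chiB p q (K * p * q) f x y)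
      = (∑ x ∈ range (K * p), ∑ y ∈ range (K * q), chiC p q (K * p) f x y) := by
  induction n using Nat.strong_induction_on with
  | _ n ih =>
  intro f hf htri hsum
  have hxP : ∀ x, 0 < f x → x < K * p := by
    intro x hx
    by_contra h
    push_neg at h
    have h1 : q * (K * p) ≤ q * x := Nat.mul_le_mul_left q h
    have h2 := htri x 0 hx
    have h3 : q * (K * p) = K * p * q := by ring
    omega
  have hfQ : ∀ x, f x ≤ K * q := by
    intro x
    by_contra h
    push_neg at h
    have h2 := htri x (K * q) h
    have h3 : p * (K * q) = K * p * q := by ring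
    omega
  by_cases hn : n = 0
  · -- base case
    subst hn
    have hf0 : ∀ x ∈ range (K * p), f x = 0 := by
      intro x hx
      exact (Finset.sum_eq_zero_iff.mp hsum) x hx
    have hl0 : ∀ y, lA (K * p) f y = 0 := by
      intro y
      rw [lA, Finset.card_eq_zero, Finset.filter_eq_empty_iff]
      intro x hx
      rw [hf0 x hx]
      omega
    have hA0 : (∑ x ∈ range (K * p), ∑ y ∈ range (K * q), chiA p q (K * p) f x y) = 0 := by
      apply Finset.sum_eq_zero
      intro x hx
      apply Finset.sum_eq_zero
      intro y _
      rw [chiA, if_neg]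
      rw [hf0 x hx]
      omega
    rw [hA0, zero_add]
    rw [← Finset.sum_range_reflect (fun x => ∑ y ∈ range (K * q), chiB p q (K * p * q) f x y) (K * p)]
    refine Finset.sum_congr rfl fun x hx => Finset.sum_congr rfl fun y hy => ?_
    rw [mem_range] at hx hy
    have hxx : K * p - 1 - x < K * p := by omega
    rw [chiB, chiC, hf0 _ (mem_range.mpr hxx), hf0 _ (mem_range.mpr hx), hl0]
    have e0 : (K * p - 1 - x) + x + 1 = K * p := by omega
    have e1 : q * (K * p - 1 - x) + q * x + q = K * p * q := by
      calc q * (K * p - 1 - x) + q * x + q = q * ((K * p - 1 - x) + x + 1) := by ring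
        _ = q * (K * p) := by rw [e0]
        _ = K * p * q := by ring
    congr 1
    simp only [eq_iff_iff]
    constructor
    · rintro ⟨-, h2⟩
      refine ⟨Nat.zero_le _, ?_⟩
      omega
    · rintro ⟨-, h2⟩
      refine ⟨Nat.zero_le _, ?_⟩
      omega
  · -- inductive step
    have hl0pos : 0 < lA (K * p) f 0 := by
      by_contra h
      push_neg at h
      apply hn
      rw [← hsum]
      apply Finset.sum_eq_zero
      intro x hx
      by_contra hfx
      have : x < lA (K * p) f 0 :=
        (lA_lt_iff (K * p) f hf 0 x).mpr ⟨mem_range.mp hx, by omega⟩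
      omega
    set x0 := lA (K * p) f 0 - 1 with hx0def
    have hx0P : x0 < K * p := by have := lA_le (K * p) f 0; omega
    have hfx0pos : 0 < f x0 := ((lA_lt_iff (K * p) f hf 0 x0).mp (by omega)).2
    set y0 := f x0 - 1 with hy0def
    have hfx0 : f x0 = y0 + 1 := by omega
    have hftail : ∀ x, x0 < x → f x = 0 := by
      intro x hx
      by_contra h
      have hxP' : x < K * p := hxP x (by omega)
      have : x < lA (K * p) f 0 := (lA_lt_iff (K * p) f hf 0 x).mpr ⟨hxP', by omega⟩
      omega
    have hfge : ∀ x, x ≤ x0 → y0 < f x := fun x hx =>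
      lt_of_lt_of_le (by omega) (hf x x0 hx)
    have htri0 : q * x0 + p * y0 + p + q ≤ K * p * q := htri x0 y0 (by omega)
    have hy0Q : y0 < K * q := by have := hfQ x0; omega
    set f' := fun x => if x = x0 then y0 else f x with hf'def
    have hf'x0 : f' x0 = y0 := by simp [hf'def]
    have hf'ne : ∀ x, x ≠ x0 → f' x = f x := fun x hx => by simp [hf'def, hx]
    have hf'le : ∀ x, f' x ≤ f x := by
      intro x
      by_cases hx : x = x0
      · subst hx; rw [hf'x0]; omega
      · rw [hf'ne x hx]
    have hf' : ∀ x y : ℕ, x ≤ y → f' y ≤ f' x := by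
      intro x y hxy
      by_cases hx : x = x0
      · subst hx
        by_cases hy : y = x0
        · subst hy; omega
        · rw [hf'ne y hy, hf'x0]
          have : x0 < y := by omega
          rw [hftail y this]
          omega
      · rw [hf'ne x hx]
        calc f' y ≤ f y := hf'le y
          _ ≤ f x := hf x y hxy
    have htri' : ∀ x y : ℕ, y < f' x → q * x + p * y + p + q ≤ K * p * q := by
      intro x y hy
      exact htri x y (lt_of_lt_of_le hy (hf'le x))
    have hsum' : ∑ x ∈ range (K * p), f' x = n - 1 := by
      have e1 := Finset.sum_erase_add (range (K * p)) f (mem_range.mpr hx0P)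
      have e2 := Finset.sum_erase_add (range (K * p)) f' (mem_range.mpr hx0P)
      have e3 : ∑ x ∈ (range (K * p)).erase x0, f' x = ∑ x ∈ (range (K * p)).erase x0, f x :=
        Finset.sum_congr rfl fun x hx => hf'ne x (Finset.mem_erase.mp hx).1
      rw [hf'x0] at e2
      rw [hfx0] at e1
      omega
    have IH := ih (n - 1) (by omega) f' hf' htri' hsum'
    -- facts about lA
    have hlyle : ∀ y, y ≤ y0 → lA (K * p) f y = x0 + 1 := by
      intro y hy
      have h1 : x0 < lA (K * p) f y :=
        (lA_lt_iff (K * p) f hf y x0).mpr ⟨hx0P, by omega⟩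
      have h2 : lA (K * p) f y ≤ lA (K * p) f 0 := by
        apply card_le_card
        intro x hx
        simp only [mem_filter] at hx ⊢
        exact ⟨hx.1, by omega⟩
      omega
    have hly0 : lA (K * p) f y0 = x0 + 1 := hlyle y0 le_rfl
    have hl'y0 : lA (K * p) f' y0 = x0 := by
      have h1 : lA (K * p) f' y0 ≤ x0 := by
        by_contra h
        push_neg at h
        have := ((lA_lt_iff (K * p) f' hf' y0 x0).mp h).2
        rw [hf'x0] at this
        omega
      have h2 : x0 ≤ lA (K * p) f' y0 := by
        rcases Nat.eq_zero_or_pos x0 with h0 | h0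
        · omega
        · have hne : x0 - 1 ≠ x0 := by omega
          have : x0 - 1 < lA (K * p) f' y0 := by
            apply (lA_lt_iff (K * p) f' hf' y0 (x0 - 1)).mpr
            constructor
            · omega
            · rw [hf'ne _ hne]
              exact hfge (x0 - 1) (by omega)
          omega
      omega
    have hl'ne : ∀ y, y ≠ y0 → lA (K * p) f' y = lA (K * p) f y := by
      intro y hy
      rw [lA, lA]
      congr 1
      apply Finset.filter_congr
      intro x _
      by_cases hx : x = x0
      · subst hx
        rw [hf'x0, hfx0]
        constructor <;> intro <;> omega
      · rw [hf'ne x hx]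
    -- abbreviations for the four boundary sums
    set RL : ℤ := ∑ x ∈ range (K * p), (if x < x0 ∧ q * x + p * f x ≤ q * x0 + p * y0
        ∧ q * x0 + p * y0 < q * x + p * f x + q then (1 : ℤ) else 0) with hRLdef
    set RR : ℤ := ∑ x ∈ range (K * p), (if x0 < x ∧ q * x0 + p * y0 + p ≤ q * x
        ∧ q * x < q * x0 + p * y0 + p + q then (1 : ℤ) else 0) with hRRdef
    set CG : ℤ := ∑ y ∈ range (K * q), (if y < y0 ∧ q * x0 + p * y0 + q ≤ q * lA (K * p) f y + p * y
        ∧ q * lA (K * p) f y + p * y < q * x0 + p * y0 + q + p then (1 : ℤ) else 0) with hCGdef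
    set CR : ℤ := ∑ y ∈ range (K * q), (if y0 < y ∧ q * lA (K * p) f y + p * y ≤ q * x0 + p * y0
        ∧ q * x0 + p * y0 < q * lA (K * p) f y + p * y + p then (1 : ℤ) else 0) with hCRdef
    -- change in B
    have EB : (∑ x ∈ range (K * p), ∑ y ∈ range (K * q), chiB p q (K * p * q) f x y)
        - (∑ x ∈ range (K * p), ∑ y ∈ range (K * q), chiB p q (K * p * q) f' x y) = -1 := by
      rw [← Finset.sum_sub_distrib]
      have hrow : ∀ x ∈ range (K * p),
          ((∑ y ∈ range (K * q), chiB p q (K * p * q) f x y)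
            - (∑ y ∈ range (K * q), chiB p q (K * p * q) f' x y))
          = if x = x0 then (-1 : ℤ) else 0 := by
        intro x _
        by_cases hxx : x = x0
        · subst hxx
          rw [if_pos rfl, ← Finset.sum_sub_distrib]
          have hpt : ∀ y ∈ range (K * q),
              chiB p q (K * p * q) f x0 y - chiB p q (K * p * q) f' x0 y
                = if y = y0 then (-1 : ℤ) else 0 := by
            intro y _
            simp only [chiB]
            rw [hf'x0, hfx0]
            by_cases hyy : y = y0
            · subst hyy
              split_ifs <;> omega
            · rw [if_neg hyy]
              split_ifs <;> omega
          rw [Finset.sum_congr rfl hpt,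
            Finset.sum_ite_eq' (range (K * q)) y0 (fun _ => (-1 : ℤ)),
            if_pos (mem_range.mpr hy0Q)]
        · rw [if_neg hxx, ← Finset.sum_sub_distrib]
          apply Finset.sum_eq_zero
          intro y _
          simp only [chiB]
          rw [hf'ne x hxx]
          ring
      rw [Finset.sum_congr rfl hrow, Finset.sum_ite_eq' (range (K * p)) x0 (fun _ => (-1 : ℤ)),
        if_pos (mem_range.mpr hx0P)]
    -- change in A
    have EA : (∑ x ∈ range (K * p), ∑ y ∈ range (K * q), chiA p q (K * p) f x y)
        - (∑ x ∈ range (K * p), ∑ y ∈ range (K * q), chiA p q (K * p) f' x y)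
        = RL - CG := by
      rw [← Finset.sum_sub_distrib, hRLdef, hCGdef]
      have hrow : ∀ x ∈ range (K * p),
          ((∑ y ∈ range (K * q), chiA p q (K * p) f x y)
            - (∑ y ∈ range (K * q), chiA p q (K * p) f' x y))
          = (if x < x0 ∧ q * x + p * f x ≤ q * x0 + p * y0
              ∧ q * x0 + p * y0 < q * x + p * f x + q then (1 : ℤ) else 0)
            + (if x = x0 then
                -(∑ y ∈ range (K * q), (if y < y0 ∧ q * x0 + p * y0 + q ≤ q * lA (K * p) f y + p * y
                  ∧ q * lA (K * p) f y + p * y < q * x0 + p * y0 + q + p then (1 : ℤ) else 0))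
              else 0) := by
        intro x _
        rw [← Finset.sum_sub_distrib]
        by_cases hxx : x = x0
        · subst hxx
          rw [if_pos rfl, if_neg (by omega), zero_add, ← Finset.sum_neg_distrib]
          apply Finset.sum_congr rfl
          intro y _
          simp only [chiA]
          rw [hfx0, hf'x0]
          have E1 : p * (y0 + 1) = p * y0 + p := by ring
          by_cases hyy : y = y0
          · subst hyy
            rw [hly0, hl'y0]
            have E2 : q * (x0 + 1) = q * x0 + q := by ring
            split_ifs <;> omega
          · rw [hl'ne y hyy]
            split_ifs <;> omega
        · rw [if_neg hxx, add_zero]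
          have hpt : ∀ y ∈ range (K * q), chiA p q (K * p) f x y - chiA p q (K * p) f' x y
              = if y = y0 then (if x < x0 ∧ q * x + p * f x ≤ q * x0 + p * y0
                  ∧ q * x0 + p * y0 < q * x + p * f x + q then (1 : ℤ) else 0) else 0 := by
            intro y _
            simp only [chiA]
            rw [hf'ne x hxx]
            by_cases hyy : y = y0
            · subst hyy
              rw [if_pos rfl, hly0, hl'y0]
              have E2 : q * (x0 + 1) = q * x0 + q := by ring
              rcases lt_or_gt_of_ne hxx with hlt | hgt
              · have hy0fx : y0 < f x := hfge x (by omega)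
                split_ifs <;> omega
              · rw [hftail x hgt]
                split_ifs <;> omega
            · rw [if_neg hyy, hl'ne y hyy]
              ring
          rw [Finset.sum_congr rfl hpt,
            Finset.sum_ite_eq' (range (K * q)) y0 _, if_pos (mem_range.mpr hy0Q)]
      rw [Finset.sum_congr rfl hrow, Finset.sum_add_distrib,
        Finset.sum_ite_eq' (range (K * p)) x0 _, if_pos (mem_range.mpr hx0P)]
      ring
    -- change in C
    have EC : (∑ x ∈ range (K * p), ∑ y ∈ range (K * q), chiC p q (K * p) f x y)
        - (∑ x ∈ range (K * p), ∑ y ∈ range (K * q), chiC p q (K * p) f' x y)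
        = CR - RR := by
      rw [← Finset.sum_sub_distrib, hCRdef, hRRdef]
      have hrow : ∀ x ∈ range (K * p),
          ((∑ y ∈ range (K * q), chiC p q (K * p) f x y)
            - (∑ y ∈ range (K * q), chiC p q (K * p) f' x y))
          = (if x = x0 then
              (∑ y ∈ range (K * q), (if y0 < y ∧ q * lA (K * p) f y + p * y ≤ q * x0 + p * y0
                ∧ q * x0 + p * y0 < q * lA (K * p) f y + p * y + p then (1 : ℤ) else 0))
              else 0)
            + (-(if x0 < x ∧ q * x0 + p * y0 + p ≤ q * x
                ∧ q * x < q * x0 + p * y0 + p + q then (1 : ℤ) else 0)) := by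
        intro x _
        rw [← Finset.sum_sub_distrib]
        by_cases hxx : x = x0
        · subst hxx
          rw [if_pos rfl, if_neg (by omega), neg_zero, add_zero]
          apply Finset.sum_congr rfl
          intro y _
          simp only [chiC]
          rw [hfx0, hf'x0]
          have E1 : p * (y0 + 1) = p * y0 + p := by ring
          by_cases hyy : y = y0
          · subst hyy
            rw [hly0, hl'y0]
            have E2 : q * (x0 + 1) = q * x0 + q := by ring
            split_ifs <;> omega
          · rw [hl'ne y hyy]
            split_ifs <;> omega
        · rw [if_neg hxx, zero_add]
          have hpt : ∀ y ∈ range (K * q), chiC p q (K * p) f x y - chiC p q (K * p) f' x y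
              = if y = y0 then (-(if x0 < x ∧ q * x0 + p * y0 + p ≤ q * x
                  ∧ q * x < q * x0 + p * y0 + p + q then (1 : ℤ) else 0)) else 0 := by
            intro y _
            simp only [chiC]
            rw [hf'ne x hxx]
            by_cases hyy : y = y0
            · subst hyy
              rw [if_pos rfl, hly0, hl'y0]
              have E2 : q * (x0 + 1) = q * x0 + q := by ring
              rcases lt_or_gt_of_ne hxx with hlt | hgt
              · have hy0fx : y0 < f x := hfge x (by omega)
                split_ifs <;> omega
              · rw [hftail x hgt]
                split_ifs <;> omega
            · rw [if_neg hyy, hl'ne y hyy]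
              ring
          rw [Finset.sum_congr rfl hpt,
            Finset.sum_ite_eq' (range (K * q)) y0 _, if_pos (mem_range.mpr hy0Q)]
      rw [Finset.sum_congr rfl hrow, Finset.sum_add_distrib,
        Finset.sum_ite_eq' (range (K * p)) x0 _, if_pos (mem_range.mpr hx0P)]
      rw [Finset.sum_neg_distrib]
      ring
    -- CG = 0
    have CG0 : CG = 0 := by
      rw [hCGdef]
      apply Finset.sum_eq_zero
      intro y _
      rw [if_neg]
      rintro ⟨h1, h2, -⟩
      rw [hlyle y (by omega)] at h2
      have E2 : q * (x0 + 1) = q * x0 + q := by ring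
      have : p * y < p * y0 := by
        exact (mul_lt_mul_iff_right₀ hp).mpr h1
      omega
    -- RR = 1
    have RR1 : RR = 1 := by
      rw [hRRdef]
      apply RRcount q (q * x0 + p * y0 + p) x0 (K * p) hq (by omega)
      have : q * (K * p) = K * p * q := by ring
      omega
    -- T1 : RL = CR  (via the telescoping core lemma)
    have T1 : RL = CR := by
      have Hcore := core (x0 + 1) (K * q) f hf (hfQ 0)
        (fun a b => if q * x0 + p * y0 < q * a + p * b then (1 : ℤ) else 0)
      have hl1lt : ∀ y, y < y0 → lA (x0 + 1) f y = x0 + 1 := by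
        intro y hy
        rw [lA, Finset.filter_true_of_mem, card_range]
        intro x hx
        rw [mem_range] at hx
        have := hfge x (by omega)
        omega
      have hl1ge : ∀ y, y0 ≤ y → lA (x0 + 1) f y = lA (K * p) f y := by
        intro y hy
        rw [lA, lA]
        congr 1
        ext x
        simp only [mem_filter, mem_range]
        constructor
        · rintro ⟨h1, h2⟩
          exact ⟨by omega, h2⟩
        · rintro ⟨h1, h2⟩
          refine ⟨?_, h2⟩
          by_contra hgt
          rw [hftail x (by omega)] at h2
          omega
      have HH : (∑ x ∈ range (x0 + 1),
            ((if q * x0 + p * y0 < q * (x + 1) + p * f x then (1 : ℤ) else 0)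
              - (if q * x0 + p * y0 < q * x + p * f x then (1 : ℤ) else 0)))
          = ∑ x ∈ range (x0 + 1), (if x < x0 ∧ q * x + p * f x ≤ q * x0 + p * y0
              ∧ q * x0 + p * y0 < q * x + p * f x + q then (1 : ℤ) else 0) := by
        refine Finset.sum_congr rfl fun x hx => ?_
        rw [mem_range] at hx
        have E4 : q * (x + 1) = q * x + q := by ring
        by_cases hxx : x = x0
        · subst hxx
          rw [hfx0]
          have E1 : p * (y0 + 1) = p * y0 + p := by ring
          split_ifs <;> omega
        · split_ifs <;> omega
      have Hext : RL = ∑ x ∈ range (x0 + 1), (if x < x0 ∧ q * x + p * f x ≤ q * x0 + p * y0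
            ∧ q * x0 + p * y0 < q * x + p * f x + q then (1 : ℤ) else 0) := by
        rw [hRLdef]
        symm
        apply Finset.sum_subset
        · rw [Finset.range_subset_range]; omega
        · intro x _ hx
          rw [mem_range] at hx
          rw [if_neg]
          rintro ⟨h1, -⟩
          omega
      have HV : (∑ y ∈ range (K * q),
            ((if q * x0 + p * y0 < q * lA (x0 + 1) f y + p * (y + 1) then (1 : ℤ) else 0)
              - (if q * x0 + p * y0 < q * lA (x0 + 1) f y + p * y then (1 : ℤ) else 0)))
          = (∑ y ∈ range (K * q), (if y < y0 ∧ q + p * y ≤ p * y0 ∧ p * y0 < q + p * y + p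
                then (1 : ℤ) else 0))
            + (∑ y ∈ range (K * q), (if y0 < y ∧ q * lA (K * p) f y + p * y ≤ q * x0 + p * y0
                ∧ q * x0 + p * y0 < q * lA (K * p) f y + p * y + p then (1 : ℤ) else 0)) := by
        rw [← Finset.sum_add_distrib]
        refine Finset.sum_congr rfl fun y _ => ?_
        have E5 : p * (y + 1) = p * y + p := by ring
        rcases lt_trichotomy y y0 with hlt | heq | hgt
        · rw [hl1lt y hlt]
          have E2 : q * (x0 + 1) = q * x0 + q := by ring
          split_ifs <;> omega
        · subst heq
          rw [hl1ge y0 le_rfl, hly0]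
          have E2 : q * (x0 + 1) = q * x0 + q := by ring
          split_ifs <;> omega
        · rw [hl1ge y (by omega)]
          split_ifs <;> omega
      rw [HH, HV] at Hcore
      have W := Wcount p q y0 (K * q) hp hq hy0Q
      have HR1 : ((q * 0 : ℕ) + p * (K * q)) = K * p * q := by ring
      have E2 : q * (x0 + 1) = q * x0 + q := by ring
      rw [Hext, hCRdef]
      rcases le_or_gt q (p * y0) with hcc | hcc
      · rw [if_pos hcc] at W
        rw [W] at Hcore
        rw [if_neg (by omega), if_pos (by omega)] at Hcore
        · linarith
      · rw [if_neg (by omega)] at W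
        rw [W] at Hcore
        rw [if_pos (by omega), if_pos (by omega)] at Hcore
        · linarith
    -- conclusion
    have hA := EA
    have hB := EB
    have hC := EC
    linarith [IH, hA, hB, hC, T1, RR1, CG0]
lemma col_mem (D : Finset (ℕ × ℕ)) (hD : IsYoung D) (x y : ℕ) :
    (x, y) ∈ D ↔ y < (D.filter fun d => d.1 = x).card := by
  classical
  have hinj : Set.InjOn (Prod.snd : ℕ × ℕ → ℕ) ↑(D.filter fun d => d.1 = x) := by
    intro a ha b hb hab
    simp only [coe_filter, Set.mem_setOf_eq] at ha hb
    exact Prod.ext (ha.2.trans hb.2.symm) hab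
  have hcard := Finset.card_image_of_injOn hinj
  have hmem : ∀ y', y' ∈ (D.filter fun d => d.1 = x).image Prod.snd ↔ (x, y') ∈ D := by
    intro y'
    simp only [mem_image, mem_filter]
    constructor
    · rintro ⟨d, ⟨hd, hd1⟩, hd2⟩
      have he : d = (x, y') := Prod.ext hd1 hd2
      rwa [he] at hd
    · intro h
      exact ⟨(x, y'), ⟨h, rfl⟩, rfl⟩
  rw [← hcard, ← hmem y]
  apply down_mem_iff
  intro a b hab hb
  rw [hmem] at hb ⊢
  exact hD x b x a hb le_rfl hab

lemma row_mem (D : Finset (ℕ × ℕ)) (hD : IsYoung D) (x y : ℕ) :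
    (x, y) ∈ D ↔ x < (D.filter fun d => d.2 = y).card := by
  classical
  have hinj : Set.InjOn (Prod.fst : ℕ × ℕ → ℕ) ↑(D.filter fun d => d.2 = y) := by
    intro a ha b hb hab
    simp only [coe_filter, Set.mem_setOf_eq] at ha hb
    exact Prod.ext hab (ha.2.trans hb.2.symm)
  have hcard := Finset.card_image_of_injOn hinj
  have hmem : ∀ x', x' ∈ (D.filter fun d => d.2 = y).image Prod.fst ↔ (x', y) ∈ D := by
    intro x'
    simp only [mem_image, mem_filter]
    constructor
    · rintro ⟨d, ⟨hd, hd2⟩, hd1⟩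
      have he : d = (x', y) := Prod.ext hd1 hd2
      rwa [he] at hd
    · intro h
      exact ⟨(x', y), ⟨h, rfl⟩, rfl⟩
  rw [← hcard, ← hmem x]
  apply down_mem_iff
  intro a b hab hb
  rw [hmem] at hb ⊢
  exact hD b y a y hb hab le_rfl

lemma arm_eq (D : Finset (ℕ × ℕ)) (hD : IsYoung D) (x y : ℕ) (hxy : (x, y) ∈ D) :
    arm D (x, y) + (x + 1) = (D.filter fun d => d.2 = y).card := by
  classical
  have hxl := (row_mem D hD x y).mp hxy
  have hinj : Set.InjOn (Prod.fst : ℕ × ℕ → ℕ) ↑(D.filter fun d => d.2 = (x, y).2 ∧ (x, y).1 < d.1) := by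
    intro a ha b hb hab
    simp only [coe_filter, Set.mem_setOf_eq] at ha hb
    exact Prod.ext hab (ha.2.1.trans hb.2.1.symm)
  have himg : (D.filter fun d => d.2 = (x, y).2 ∧ (x, y).1 < d.1).image Prod.fst
      = Ico (x + 1) ((D.filter fun d => d.2 = y).card) := by
    ext x'
    simp only [mem_image, mem_filter, mem_Ico]
    constructor
    · rintro ⟨d, ⟨hd, hd2, hd1⟩, rfl⟩
      have hmemd : (d.1, y) ∈ D := by
        have he : d = (d.1, y) := Prod.ext rfl hd2
        rwa [he] at hd
      exact ⟨by omega, (row_mem D hD d.1 y).mp hmemd⟩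
    · rintro ⟨h1, h2⟩
      exact ⟨(x', y), ⟨(row_mem D hD x' y).mpr h2, rfl, by omega⟩, rfl⟩
  have := Finset.card_image_of_injOn hinj
  rw [himg, Nat.card_Ico] at this
  rw [arm]
  omega

lemma leg_eq (D : Finset (ℕ × ℕ)) (hD : IsYoung D) (x y : ℕ) (hxy : (x, y) ∈ D) :
    leg D (x, y) + (y + 1) = (D.filter fun d => d.1 = x).card := by
  classical
  have hxl := (col_mem D hD x y).mp hxy
  have hinj : Set.InjOn (Prod.snd : ℕ × ℕ → ℕ) ↑(D.filter fun d => d.1 = (x, y).1 ∧ (x, y).2 < d.2) := by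
    intro a ha b hb hab
    simp only [coe_filter, Set.mem_setOf_eq] at ha hb
    exact Prod.ext (ha.2.1.trans hb.2.1.symm) hab
  have himg : (D.filter fun d => d.1 = (x, y).1 ∧ (x, y).2 < d.2).image Prod.snd
      = Ico (y + 1) ((D.filter fun d => d.1 = x).card) := by
    ext y'
    simp only [mem_image, mem_filter, mem_Ico]
    constructor
    · rintro ⟨d, ⟨hd, hd1, hd2⟩, rfl⟩
      have hmemd : (x, d.2) ∈ D := by
        have he : d = (x, d.2) := Prod.ext hd1 rfl
        rwa [he] at hd
      exact ⟨by omega, (col_mem D hD x d.2).mp hmemd⟩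
    · rintro ⟨h1, h2⟩
      exact ⟨(x, y'), ⟨(col_mem D hD x y').mpr h2, rfl, by omega⟩, rfl⟩
  have := Finset.card_image_of_injOn hinj
  rw [himg, Nat.card_Ico] at this
  rw [leg]
  omega

lemma coArm_eq (D : Finset (ℕ × ℕ)) (hD : IsYoung D) (x y : ℕ) (hxy : (x, y) ∉ D) :
    coArm D (x, y) + (D.filter fun d => d.2 = y).card = x := by
  classical
  have hlam : (D.filter fun d => d.2 = y).card ≤ x := by
    by_contra hc
    push_neg at hc
    exact hxy ((row_mem D hD x y).mpr hc)
  rw [coArm]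
  rw [Finset.filter_not, Finset.card_sdiff_of_subset (Finset.filter_subset _ _), card_range]
  have hfil : (range (x, y).1).filter (fun x' => (x', (x, y).2) ∈ D)
      = range ((D.filter fun d => d.2 = y).card) := by
    ext x'
    simp only [mem_filter, mem_range]
    constructor
    · rintro ⟨h1, h2⟩
      exact (row_mem D hD x' y).mp h2
    · intro h1
      exact ⟨by omega, (row_mem D hD x' y).mpr h1⟩
  rw [hfil, card_range]
  omega

lemma coLeg_eq (D : Finset (ℕ × ℕ)) (hD : IsYoung D) (x y : ℕ) (hxy : (x, y) ∉ D) :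
    coLeg D (x, y) + (D.filter fun d => d.1 = x).card = y := by
  classical
  have hlam : (D.filter fun d => d.1 = x).card ≤ y := by
    by_contra hc
    push_neg at hc
    exact hxy ((col_mem D hD x y).mpr hc)
  rw [coLeg]
  rw [Finset.filter_not, Finset.card_sdiff_of_subset (Finset.filter_subset _ _), card_range]
  have hfil : (range (x, y).2).filter (fun y' => ((x, y).1, y') ∈ D)
      = range ((D.filter fun d => d.1 = x).card) := by
    ext y'
    simp only [mem_filter, mem_range]
    constructor
    · rintro ⟨h1, h2⟩
      exact (col_mem D hD x y').mp h2
    · intro h1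
      exact ⟨by omega, (col_mem D hD x y').mpr h1⟩
  rw [hfil, card_range]
  omega

theorem GM_bijection_southeast (D : Finset (ℕ × ℕ)) (hD : IsYoung D)
    (p q K : ℕ) (hp : 0 < p) (hq : 0 < q) (hK : 0 < K) (hpq : Nat.Coprime p q)
    (hdiag : ∀ c ∈ D, q * c.1 + p * c.2 + p + q ≤ K * p * q) :
    (D.filter fun c => p * (leg D c + 1) ≤ q * arm D c).card
      + (((Finset.range (K * p)) ×ˢ (Finset.range (K * q))).filter
          fun c => q * c.1 + p * c.2 + p + q ≤ K * p * q ∧ c ∉ D).card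
      = (((Finset.range (K * p)) ×ˢ (Finset.range (K * q))).filter
          fun c => c ∉ D ∧ p * (coLeg D c + 1) ≤ q * coArm D c).card := by
  classical
  set f : ℕ → ℕ := fun x => (D.filter fun d => d.1 = x).card with hfdef
  set lam : ℕ → ℕ := fun y => (D.filter fun d => d.2 = y).card with hlamdef
  have hmem : ∀ x y : ℕ, (x, y) ∈ D ↔ y < f x := fun x y => col_mem D hD x y
  have hrmem : ∀ x y : ℕ, (x, y) ∈ D ↔ x < lam y := fun x y => row_mem D hD x y
  have hf : ∀ x y : ℕ, x ≤ y → f y ≤ f x := by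
    intro x y hxy
    by_contra h
    push_neg at h
    have h1 : (y, f x) ∈ D := (hmem y (f x)).mpr h
    have h2 : (x, f x) ∈ D := hD y (f x) x (f x) h1 hxy le_rfl
    rw [hmem] at h2
    omega
  have htri : ∀ x y : ℕ, y < f x → q * x + p * y + p + q ≤ K * p * q := by
    intro x y h
    exact hdiag (x, y) ((hmem x y).mpr h)
  have hxP : ∀ x y : ℕ, (x, y) ∈ D → x < K * p ∧ y < K * q := by
    intro x y hxy
    have h1 := hdiag (x, y) hxy
    simp only at h1
    constructor
    · by_contra h
      push_neg at h
      have h2 : q * (K * p) ≤ q * x := Nat.mul_le_mul_left q h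
      have e : q * (K * p) = K * p * q := by ring
      omega
    · by_contra h
      push_neg at h
      have h2 : p * (K * q) ≤ p * y := Nat.mul_le_mul_left p h
      have e : p * (K * q) = K * p * q := by ring
      omega
  have hlA : ∀ y, lA (K * p) f y = lam y := by
    intro y
    rw [lA]
    have himg : (range (K * p)).filter (fun x => y < f x)
        = (D.filter fun d => d.2 = y).image Prod.fst := by
      ext x
      simp only [mem_filter, mem_range, mem_image]
      constructor
      · rintro ⟨h1, h2⟩
        exact ⟨(x, y), ⟨(hmem x y).mpr h2, rfl⟩, rfl⟩
      · rintro ⟨d, ⟨hd, hd2⟩, rfl⟩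
        have hmemd : (d.1, y) ∈ D := by
          have he : d = (d.1, y) := Prod.ext rfl hd2
          rwa [he] at hd
        exact ⟨(hxP d.1 y hmemd).1, (hmem d.1 y).mp hmemd⟩
    rw [himg, Finset.card_image_of_injOn]
    intro a ha b hb hab
    simp only [coe_filter, Set.mem_setOf_eq] at ha hb
    exact Prod.ext hab (ha.2.trans hb.2.symm)
  have habs := abstract p q K hp hq hK (∑ x ∈ range (K * p), f x) f hf htri rfl
  have hDsub : D ⊆ (range (K * p)) ×ˢ (range (K * q)) := by
    intro c hc
    rw [mem_product, mem_range, mem_range]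
    exact hxP c.1 c.2 (by rwa [Prod.mk.eta])
  have cardA : (((D.filter fun c => p * (leg D c + 1) ≤ q * arm D c).card : ℤ))
      = ∑ x ∈ range (K * p), ∑ y ∈ range (K * q), chiA p q (K * p) f x y := by
    have hset : D.filter (fun c => p * (leg D c + 1) ≤ q * arm D c)
        = ((range (K * p)) ×ˢ (range (K * q))).filter
            (fun c => c ∈ D ∧ p * (leg D c + 1) ≤ q * arm D c) := by
      ext c
      simp only [mem_filter]
      constructor
      · rintro ⟨h1, h2⟩
        exact ⟨hDsub h1, h1, h2⟩
      · rintro ⟨-, h1, h2⟩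
        exact ⟨h1, h2⟩
    rw [hset, Finset.card_filter]
    push_cast
    rw [Finset.sum_product]
    refine Finset.sum_congr rfl fun x hx => Finset.sum_congr rfl fun y hy => ?_
    simp only [chiA]
    refine if_congr ?_ rfl rfl
    by_cases hxy : (x, y) ∈ D
    · have hyf := (hmem x y).mp hxy
      have hxl := (hrmem x y).mp hxy
      obtain ⟨a, ha⟩ : ∃ a, f x = y + 1 + a := ⟨f x - (y + 1), by omega⟩
      obtain ⟨b, hb⟩ : ∃ b, lam y = x + 1 + b := ⟨lam y - (x + 1), by omega⟩
      have hlg : leg D (x, y) = a := by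
        have h1 := leg_eq D hD x y hxy
        have h2 : f x = (D.filter fun d => d.1 = x).card := rfl
        omega
      have har : arm D (x, y) = b := by
        have h1 := arm_eq D hD x y hxy
        have h2 : lam y = (D.filter fun d => d.2 = y).card := rfl
        omega
      rw [hlg, har, hlA y, ha, hb]
      have E1 : p * (y + 1 + a) = p * y + p + p * a := by ring
      have E2 : q * (x + 1 + b) = q * x + q + q * b := by ring
      have E3 : p * (a + 1) = p * a + p := by ring
      constructor
      · rintro ⟨-, h⟩
        exact ⟨by omega, by omega⟩
      · rintro ⟨-, h⟩
        exact ⟨hxy, by omega⟩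
    · have hyf : ¬ y < f x := fun h => hxy ((hmem x y).mpr h)
      constructor
      · rintro ⟨h, -⟩
        exact absurd h hxy
      · rintro ⟨h, -⟩
        exact absurd h hyf
  have cardB : (((((range (K * p)) ×ˢ (range (K * q))).filter
          fun c => q * c.1 + p * c.2 + p + q ≤ K * p * q ∧ c ∉ D).card : ℤ))
      = ∑ x ∈ range (K * p), ∑ y ∈ range (K * q), chiB p q (K * p * q) f x y := by
    rw [Finset.card_filter]
    push_cast
    rw [Finset.sum_product]
    refine Finset.sum_congr rfl fun x hx => Finset.sum_congr rfl fun y hy => ?_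
    simp only [chiB]
    refine if_congr ?_ rfl rfl
    have hnm : (x, y) ∉ D ↔ f x ≤ y := by
      rw [hmem x y]
      omega
    constructor
    · rintro ⟨h1, h2⟩
      exact ⟨hnm.mp h2, h1⟩
    · rintro ⟨h1, h2⟩
      exact ⟨h2, hnm.mpr h1⟩
  have cardC : (((((range (K * p)) ×ˢ (range (K * q))).filter
          fun c => c ∉ D ∧ p * (coLeg D c + 1) ≤ q * coArm D c).card : ℤ))
      = ∑ x ∈ range (K * p), ∑ y ∈ range (K * q), chiC p q (K * p) f x y := by
    rw [Finset.card_filter]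
    push_cast
    rw [Finset.sum_product]
    refine Finset.sum_congr rfl fun x hx => Finset.sum_congr rfl fun y hy => ?_
    simp only [chiC]
    refine if_congr ?_ rfl rfl
    by_cases hxy : (x, y) ∈ D
    · have hyf := (hmem x y).mp hxy
      constructor
      · rintro ⟨h, -⟩
        exact absurd hxy h
      · rintro ⟨h, -⟩
        exact absurd hyf (by omega)
    · have hyf : f x ≤ y := by
        by_contra hc
        push_neg at hc
        exact hxy ((hmem x y).mpr hc)
      have hxl : lam y ≤ x := by
        by_contra hc
        push_neg at hc
        exact hxy ((hrmem x y).mpr hc)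
      obtain ⟨a, ha⟩ : ∃ a, y = f x + a := ⟨y - f x, by omega⟩
      obtain ⟨b, hb⟩ : ∃ b, x = lam y + b := ⟨x - lam y, by omega⟩
      have hcl : coLeg D (x, y) = a := by
        have h1 := coLeg_eq D hD x y hxy
        have h2 : f x = (D.filter fun d => d.1 = x).card := rfl
        omega
      have hca : coArm D (x, y) = b := by
        have h1 := coArm_eq D hD x y hxy
        have h2 : lam y = (D.filter fun d => d.2 = y).card := rfl
        omega
      rw [hcl, hca, hlA y]
      have e1 : p * y = p * f x + p * a := by rw [ha]; ring
      have e2 : q * x = q * lam y + q * b := by rw [hb]; ring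
      have E3 : p * (a + 1) = p * a + p := by ring
      constructor
      · rintro ⟨-, h⟩
        exact ⟨hyf, by omega⟩
      · rintro ⟨-, h⟩
        exact ⟨hxy, by omega⟩
  have h := habs
  rw [← cardA, ← cardB, ← cardC] at h
  exact_mod_cast h
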